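/- Let G be a non-Hamiltonian graph on n vertices, C a longest cycle of G with a fixed orientation, R a component of G − V(C), and v_i, v_j two distinct vertices of C each having a neighbor in R such that there is a (v_i, v_j)-path with all internal vertices in R. Then v_i⁻v_j⁻ ∉ Ẽ(G) and v_i⁺v_j⁺ ∉ Ẽ(G), where Ẽ(G) = {xy : xy ∈ E(G) or d(x)+d(y) ≥ n}. -/

import Mathlib

open SimpleGraph

/-- A vertex is heavy if its degree is at least half the number of vertices. -/
def Heavy {V : Type*} [Fintype V] (G : SimpleGraph V) (v : V) : Prop :=
  Fintype.card V ≤ 2 * (G.neighborSet v).ncard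

/-- `{x,y} ∈ Ẽ(G)`: distinct vertices that are adjacent or have degree sum at least `n`. -/
def TEdge {V : Type*} [Fintype V] (G : SimpleGraph V) (x y : V) : Prop :=
  x ≠ y ∧ (G.Adj x y ∨
    Fintype.card V ≤ (G.neighborSet x).ncard + (G.neighborSet y).ncard)

/-- `a` is the center and `b,c,d` the end vertices of an induced claw `K_{1,3}`. -/
def IsClaw {V : Type*} (G : SimpleGraph V) (a b c d : V) : Prop :=
  G.Adj a b ∧ G.Adj a c ∧ G.Adj a d ∧
    ¬ G.Adj b c ∧ ¬ G.Adj b d ∧ ¬ G.Adj c d ∧ b ≠ c ∧ b ≠ d ∧ c ≠ d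

/-- Every claw has at least one heavy end vertex. -/
def OneHeavy {V : Type*} [Fintype V] (G : SimpleGraph V) : Prop :=
  ∀ a b c d, IsClaw G a b c d → Heavy G b ∨ Heavy G c ∨ Heavy G d

/-- Every claw has at least two heavy end vertices. -/
def TwoHeavy {V : Type*} [Fintype V] (G : SimpleGraph V) : Prop :=
  ∀ a b c d, IsClaw G a b c d →
    (Heavy G b ∧ Heavy G c) ∨ (Heavy G b ∧ Heavy G d) ∨ (Heavy G c ∧ Heavy G d)

/-- Every claw has two end vertices with degree sum at least `n`. -/
def ClawHeavy {V : Type*} [Fintype V] (G : SimpleGraph V) : Prop :=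
  ∀ a b c d, IsClaw G a b c d →
    Fintype.card V ≤ (G.neighborSet b).ncard + (G.neighborSet c).ncard ∨
    Fintype.card V ≤ (G.neighborSet b).ncard + (G.neighborSet d).ncard ∨
    Fintype.card V ≤ (G.neighborSet c).ncard + (G.neighborSet d).ncard

/-- `G` contains no induced claw. -/
def ClawFree {V : Type*} (G : SimpleGraph V) : Prop :=
  ∀ a b c d, ¬ IsClaw G a b c d

/-- Almost distance-hereditary: in every connected induced subgraph the distance
between two vertices exceeds their distance in `G` by at most one. -/
def AlmostDH {V : Type*} (G : SimpleGraph V) : Prop :=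
  ∀ s : Set V, (G.induce s).Connected →
    ∀ x y : s, (G.induce s).dist x y ≤ G.dist (x : V) (y : V) + 1

/-- Distance-hereditary: every connected induced subgraph preserves distances. -/
def DistHered {V : Type*} (G : SimpleGraph V) : Prop :=
  ∀ s : Set V, (G.induce s).Connected →
    ∀ x y : s, (G.induce s).dist x y = G.dist (x : V) (y : V)

/-- A cycle in `G`, encoded as an injective cyclic sequence of `m ≥ 3` pairwise
adjacent-in-order vertices. -/
def IsCycleMap {V : Type*} (G : SimpleGraph V) (m : ℕ) (f : ZMod m → V) : Prop :=
  3 ≤ m ∧ Function.Injective f ∧ ∀ i, G.Adj (f i) (f (i + 1))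

/-- A longest cycle of `G`. -/
def IsLongestCycleMap {V : Type*} (G : SimpleGraph V) (m : ℕ) (f : ZMod m → V) : Prop :=
  IsCycleMap G m f ∧ ∀ (m' : ℕ) (f' : ZMod m' → V), IsCycleMap G m' f' → m' ≤ m

/-- `R` is a connected component of the subgraph of `G` induced on `W`. -/
def IsCompOf {V : Type*} (G : SimpleGraph V) (W R : Set V) : Prop :=
  R.Nonempty ∧ R ⊆ W ∧ (G.induce R).Connected ∧
    ∀ x ∈ R, ∀ y ∈ W, G.Adj x y → y ∈ R


private lemma aux_cycle {V : Type*} [DecidableEq V] (G : SimpleGraph V) (l : List V) (h3 : 3 ≤ l.length) (hn : l.Nodup)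
    (hc : l.Chain' G.Adj) (hne : l ≠ [])
    (hcyc : G.Adj (l.getLast hne) (l.head hne)) :
    ∃ f' : ZMod l.length → V, IsCycleMap G l.length f' := by
  haveI : NeZero l.length := ⟨by omega⟩
  haveI : Fact (1 < l.length) := ⟨by omega⟩
  refine ⟨fun i => l.getD i.val (l.head hne), h3, ?_, ?_⟩
  · intro i j hij
    simp only [List.getD_eq_getElem _ _ (ZMod.val_lt _)] at hij
    exact ZMod.val_injective _ ((hn.getElem_inj_iff).1 hij)
  · intro i
    simp only [List.getD_eq_getElem _ _ (ZMod.val_lt _)]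
    have hval : (i + 1).val = (i.val + 1) % l.length := by
      rw [ZMod.val_add, ZMod.val_one]
    rcases Nat.lt_or_ge (i.val + 1) l.length with h | h
    · have h2 : (i + 1).val = i.val + 1 := by rw [hval, Nat.mod_eq_of_lt h]
      have := List.isChain_iff_getElem.1 hc i.val (by omega)
      simp only [h2]
      exact this
    · have hi : i.val = l.length - 1 := by have := ZMod.val_lt i; omega
      have h2 : (i + 1).val = 0 := by
        rw [hval, hi]
        simp [Nat.sub_add_cancel (by omega : 1 ≤ l.length)]
      simp only [h2, hi]
      rw [← List.getLast_eq_getElem hne, List.getElem_zero]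
      exact hcyc

open List in
private lemma aux_key {V : Type*} [Fintype V] [DecidableEq V] {G : SimpleGraph V} {m : ℕ} (h3 : 3 ≤ m)
    (hmax : ∀ (m' : ℕ) (f' : ZMod m' → V), IsCycleMap G m' f' → m' ≤ m)
    (l : List V) (hn : l.Nodup) (hc : l.Chain' G.Adj) (hm : m < l.length)
    (hne : l ≠ []) : ¬ TEdge G (l.head hne) (l.getLast hne) := by
  classical
  have hclose : ∀ (l' : List V) (hne' : l' ≠ []), l'.Nodup → l'.Chain' G.Adj →
      m < l'.length → G.Adj (l'.getLast hne') (l'.head hne') → False := by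
    intro l' hne' hn' hc' hm' hadj
    obtain ⟨f', hf'⟩ := aux_cycle G l' (by omega) hn' hc' hne' hadj
    exact absurd (hmax _ _ hf') (by omega)
  rintro ⟨hne', hor⟩
  set u := l.head hne with hu
  set w := l.getLast hne with hw
  have hnadj : ¬ G.Adj u w := fun h => hclose l hne hn hc hm h.symm
  have hdeg : Fintype.card V ≤ (G.neighborSet u).ncard + (G.neighborSet w).ncard := by
    rcases hor with h | h
    · exact absurd h hnadj
    · exact h
  clear hor
  have hncard : ∀ v : V, (G.neighborSet v).ncard = (G.neighborFinset v).card := by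
    intro v
    rw [← Set.ncard_coe_finset, neighborFinset_def, Set.coe_toFinset]
  rw [hncard, hncard] at hdeg
  set T := l.toFinset with hT
  set N₁ := G.neighborFinset u with hN1
  set N₂ := G.neighborFinset w with hN2
  have hcardT : T.card = l.length := List.toFinset_card_of_nodup hn
  have hsn : l.length ≤ Fintype.card V := by
    rw [← hcardT]
    exact Finset.card_le_card (Finset.subset_univ T) |>.trans_eq (Finset.card_univ)
  -- outside part
  have hout : (N₁ \ T).card + (N₂ \ T).card ≤ Fintype.card V - l.length := by
    have hdisj : Disjoint (N₁ \ T) (N₂ \ T) := by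
      rw [Finset.disjoint_left]
      rintro x hx1 hx2
      rw [Finset.mem_sdiff, mem_neighborFinset] at hx1 hx2
      obtain ⟨hx1a, hxT⟩ := hx1
      obtain ⟨hx2a, -⟩ := hx2
      have hxl : x ∉ l := fun h => hxT (List.mem_toFinset.2 h)
      have hnel : l ++ [x] ≠ [] := by simp
      apply hclose (l ++ [x]) hnel ?_ ?_ ?_ ?_
      · exact List.nodup_append.2 ⟨hn, List.nodup_singleton x,
          fun y hy y' hy' hyy => by subst hyy; simp at hy'; subst hy'; exact hxl hy⟩
      · refine List.isChain_append.2 ⟨hc, List.isChain_singleton x, ?_⟩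
        intro a ha b hb
        rw [List.getLast?_eq_getLast hne] at ha
        simp at ha hb
        subst ha; subst hb
        exact hx2a
      · simp only [List.length_append, List.length_singleton]; omega
      · rw [List.getLast_concat]
        have hh : (l ++ [x]).head hnel = u := by
          rw [List.head_append]
          simp [hne, hu]
        rw [hh]
        exact hx1a.symm
    calc (N₁ \ T).card + (N₂ \ T).card = ((N₁ \ T) ∪ (N₂ \ T)).card :=
          (Finset.card_union_of_disjoint hdisj).symm
      _ ≤ Tᶜ.card := Finset.card_le_card (by
          intro x hx
          rw [Finset.mem_union] at hx
          rcases hx with h | h <;> exact Finset.mem_compl.2 (Finset.mem_sdiff.1 h).2)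
      _ = Fintype.card V - l.length := by rw [Finset.card_compl, hcardT]
  -- inside part
  have hule : u = l[0]'(by omega) := List.head_eq_getElem hne
  have hwle : w = l[l.length-1]'(by omega) := List.getLast_eq_getElem hne
  have hidx : ∀ x ∈ N₁ ∩ T, 1 ≤ l.idxOf x ∧ l.idxOf x < l.length := by
    intro x hx
    rw [Finset.mem_inter, mem_neighborFinset, List.mem_toFinset] at hx
    have hlt : l.idxOf x < l.length := List.idxOf_lt_length_iff.2 hx.2
    refine ⟨?_, hlt⟩
    by_contra h
    have h0 : l.idxOf x = 0 := by omega
    have hg : l[l.idxOf x]'hlt = x := List.getElem_idxOf _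
    simp only [h0] at hg
    rw [← hule] at hg
    exact G.ne_of_adj hx.1 hg
  have hidx2 : ∀ x ∈ N₂ ∩ T, l.idxOf x < l.length - 1 := by
    intro x hx
    rw [Finset.mem_inter, mem_neighborFinset, List.mem_toFinset] at hx
    have hlt : l.idxOf x < l.length := List.idxOf_lt_length_iff.2 hx.2
    have hg : l[l.idxOf x]'hlt = x := List.getElem_idxOf _
    by_contra h
    have h0 : l.idxOf x = l.length - 1 := by omega
    simp only [h0] at hg
    rw [← hwle] at hg
    exact G.ne_of_adj hx.1 hg
  have hin : (N₁ ∩ T).card + (N₂ ∩ T).card ≤ l.length - 1 := by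
    set I₁ := (N₁ ∩ T).image (fun x => l.idxOf x - 1) with hI1
    set I₂ := (N₂ ∩ T).image (fun x => l.idxOf x) with hI2
    have hc1 : I₁.card = (N₁ ∩ T).card := Finset.card_image_of_injOn (by
      intro x hx y hy hxy
      have h1 := hidx x hx
      have h2 := hidx y hy
      simp only at hxy
      have hxy' : l.idxOf x = l.idxOf y := by omega
      rw [Finset.mem_coe, Finset.mem_inter, List.mem_toFinset] at hx hy
      exact (List.idxOf_inj hx.2).1 hxy')
    have hc2 : I₂.card = (N₂ ∩ T).card := Finset.card_image_of_injOn (by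
      intro x hx y hy hxy
      rw [Finset.mem_coe, Finset.mem_inter, List.mem_toFinset] at hx hy
      exact (List.idxOf_inj hx.2).1 hxy)
    have hdisjI : Disjoint I₁ I₂ := by
      rw [Finset.disjoint_left]
      rintro j hj1 hj2
      rw [hI1, Finset.mem_image] at hj1
      rw [hI2, Finset.mem_image] at hj2
      obtain ⟨x, hx, hxj⟩ := hj1
      obtain ⟨y, hy, hyj⟩ := hj2
      replace hxj : l.idxOf x - 1 = j := hxj
      replace hyj : l.idxOf y = j := hyj
      have hix := hidx x hx
      have hiy := hidx2 y hy
      have hxival : l.idxOf x = j + 1 := by omega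
      have hyival : l.idxOf y = j := hyj
      have hjlt : j + 1 < l.length := by omega
      have hjlt2 : j < l.length - 1 := by omega
      have hjls : j + 1 < l.length := hjlt
      -- adjacency facts
      rw [Finset.mem_inter, mem_neighborFinset] at hx hy
      have hadjx : G.Adj u (l[j+1]'hjls) := by
        have hg : l[l.idxOf x]'(by omega) = x := List.getElem_idxOf _
        simp only [hxival] at hg
        rw [hg]; exact hx.1
      have hadjy : G.Adj w (l[j]'(by omega)) := by
        have hg : l[l.idxOf y]'(by omega) = y := List.getElem_idxOf _
        simp only [hyival] at hg
        rw [hg]; exact hy.1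
      -- crossing cycle
      have htne : l.take (j+1) ≠ [] := by
        have hlen : (l.take (j+1)).length = j + 1 := by
          rw [List.length_take]; omega
        intro h
        rw [h] at hlen
        simp at hlen
      have hdne : l.drop (j+1) ≠ [] := by
        have hlen : (l.drop (j+1)).length = l.length - (j+1) := List.length_drop
        intro h
        rw [h] at hlen
        simp at hlen
        omega
      have hrne : (l.drop (j+1)).reverse ≠ [] := by
        simpa using hdne
      have hcne : l.take (j+1) ++ (l.drop (j+1)).reverse ≠ [] := by
        intro h
        exact htne (List.append_eq_nil_iff.1 h).1
      have hflip : flip G.Adj = G.Adj := by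
        ext x y
        exact G.adj_comm y x
      apply hclose (l.take (j+1) ++ (l.drop (j+1)).reverse) hcne ?_ ?_ ?_ ?_
      · have hperm : l.take (j+1) ++ (l.drop (j+1)).reverse ~ l := by
          calc l.take (j+1) ++ (l.drop (j+1)).reverse
              ~ l.take (j+1) ++ l.drop (j+1) := List.Perm.append_left _ (List.reverse_perm _)
            _ = l := List.take_append_drop _ _
        exact hperm.symm.nodup hn
      · refine List.isChain_append.2 ⟨hc.prefix (List.take_prefix _ _), ?_, ?_⟩
        · rw [List.isChain_reverse, show (fun a b => G.Adj b a) = G.Adj from hflip]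
          exact hc.drop _
        · intro a ha b hb
          rw [List.getLast?_eq_getLast htne] at ha
          rw [List.head?_reverse, List.getLast?_eq_getLast hdne] at hb
          simp only [Option.mem_def, Option.some_inj] at ha hb
          subst ha; subst hb
          have h1 : (l.take (j+1)).getLast htne = l[j]'(by omega) := by
            rw [List.getLast_eq_getElem]
            have hlt : (l.take (j+1)).length - 1 = j := by
              simp only [List.length_take]
              omega
            simp only [hlt, List.getElem_take]
          have h2 : (l.drop (j+1)).getLast hdne = l[l.length-1]'(by omega) := by
            rw [List.getLast_eq_getElem, List.getElem_drop]
            congr 1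
            simp only [List.length_drop]
            omega
          rw [h1, h2, ← hwle]
          exact hadjy.symm
      · simp only [List.length_append, List.length_take, List.length_reverse,
          List.length_drop]
        omega
      · have hchead : (l.take (j+1) ++ (l.drop (j+1)).reverse).head hcne = u := by
          rw [List.head_append, dif_neg (by simpa using htne), List.head_take]
        have hclast : (l.take (j+1) ++ (l.drop (j+1)).reverse).getLast hcne
            = l[j+1]'hjls := by
          rw [List.getLast_append, dif_neg (by simpa using hrne),
            List.getLast_reverse, List.head_drop]
        rw [hchead, hclast]
        exact hadjx.symm
    calc (N₁ ∩ T).card + (N₂ ∩ T).card = I₁.card + I₂.card := by rw [hc1, hc2]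
      _ = (I₁ ∪ I₂).card := (Finset.card_union_of_disjoint hdisjI).symm
      _ ≤ (Finset.range (l.length-1)).card := Finset.card_le_card (by
          intro j hj
          rw [Finset.mem_union] at hj
          rw [Finset.mem_range]
          rcases hj with h | h
          · rw [hI1, Finset.mem_image] at h
            obtain ⟨x, hx, hxj⟩ := h
            replace hxj : l.idxOf x - 1 = j := hxj
            have := hidx x hx
            omega
          · rw [hI2, Finset.mem_image] at h
            obtain ⟨y, hy, hyj⟩ := h
            replace hyj : l.idxOf y = j := hyj
            have := hidx2 y hy
            omega)
      _ = l.length - 1 := Finset.card_range _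
  have e1 : (N₁ ∩ T).card + (N₁ \ T).card = N₁.card := Finset.card_inter_add_card_sdiff _ _
  have e2 : (N₂ ∩ T).card + (N₂ \ T).card = N₂.card := Finset.card_inter_add_card_sdiff _ _
  omega

private lemma lemma3b_minus {V : Type*} [Fintype V] [DecidableEq V] {G : SimpleGraph V} {m : ℕ} {f : ZMod m → V}
    (hC : IsLongestCycleMap G m f)
    (a b : ZMod m) (hab : a ≠ b)
    (p : G.Walk (f a) (f b)) (hp : p.IsPath) (hlen : 2 ≤ p.length)
    (hint : ∀ x ∈ p.support, x ≠ f a → x ≠ f b → x ∉ Set.range f) :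
    ¬ TEdge G (f (a - 1)) (f (b - 1)) := by
  obtain ⟨⟨h3, hinj, hadj⟩, hmax⟩ := hC
  haveI : NeZero m := ⟨by omega⟩
  set k := (b - a).val with hk
  have hkcast : ((k : ℕ) : ZMod m) = b - a := ZMod.natCast_rightInverse _
  have hk1 : 1 ≤ k := by
    rcases Nat.eq_zero_or_pos k with h | h
    · exfalso
      apply hab
      have : b - a = 0 := by rwa [ZMod.val_eq_zero] at h
      have := sub_eq_zero.1 this
      exact this.symm
    · exact h
  have hkm : k < m := ZMod.val_lt _
  clear_value k
  -- the interior of p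
  set I := p.support.tail.dropLast with hI
  have hSne : p.support ≠ [] := p.support_ne_nil
  have hShead : p.support.head hSne = f a := SimpleGraph.Walk.head_support p
  have hSlast : p.support.getLast hSne = f b := SimpleGraph.Walk.getLast_support p
  have hSlen : p.support.length = p.length + 1 := SimpleGraph.Walk.length_support p
  have htne : p.support.tail ≠ [] := by
    intro h
    have := congrArg List.length h
    rw [List.length_tail, hSlen] at this
    simp only [List.length_nil, Nat.add_sub_cancel] at this
    omega
  have hIlen : I.length = p.length - 1 := by
    rw [hI, List.length_dropLast, List.length_tail, hSlen]
    omega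
  have hIne : I ≠ [] := by
    intro h
    have := congrArg List.length h
    rw [hIlen] at this
    simp at this
    omega
  have hd2 : f a :: p.support.tail = p.support := by
    conv_rhs => rw [← List.cons_head_tail hSne]
    rw [hShead]
  have hd1 : p.support.dropLast ++ [f b] = p.support := by
    conv_rhs => rw [← List.dropLast_append_getLast hSne]
    rw [hSlast]
  have hd3 : p.support.dropLast = f a :: I := by
    rw [hI, ← hd2, List.dropLast_cons_of_ne_nil htne, List.tail_cons]
  have hdecomp : p.support = f a :: (I ++ [f b]) := by
    rw [← hd1, hd3, List.cons_append]
  -- chain facts about the interior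
  have hchainS : List.IsChain G.Adj p.support := p.isChain_adj_support
  rw [hdecomp, List.isChain_cons] at hchainS
  obtain ⟨hJ1, hchain2⟩ := hchainS
  rw [List.isChain_append] at hchain2
  obtain ⟨hchainI, -, hJ2⟩ := hchain2
  have hJhead : G.Adj (f a) (I.head hIne) := by
    apply hJ1
    rw [List.head?_append_of_ne_nil _ hIne, List.head?_eq_head hIne]
    rfl
  have hJlast : G.Adj (I.getLast hIne) (f b) := by
    apply hJ2
    · rw [List.getLast?_eq_getLast hIne]; rfl
    · rfl
  -- nodup facts about interior
  have hnodupS := hp.support_nodup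
  rw [hdecomp, List.nodup_cons] at hnodupS
  obtain ⟨hfa_notin, hnodup2⟩ := hnodupS
  rw [List.nodup_append] at hnodup2
  obtain ⟨hInodup, -, hdisjIb⟩ := hnodup2
  have hfb_notin : f b ∉ I := fun h => hdisjIb _ h _ (List.mem_singleton_self _) rfl
  have hImem : ∀ x ∈ I, x ∉ Set.range f := by
    intro x hx
    apply hint x
    · rw [hdecomp]; exact List.mem_cons_of_mem _ (List.mem_append_left _ hx)
    · rintro rfl; exact hfa_notin (List.mem_append_left _ hx)
    · rintro rfl; exact hfb_notin hx
  -- the three segments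
  set A₁ := (List.range (m - k)).map (fun i : ℕ => f (a - 1 - (i : ℕ))) with hA1
  set A₂ := I.reverse with hA2
  set A₃ := (List.range k).map (fun i : ℕ => f (a + (i : ℕ))) with hA3
  set q := A₁ ++ (A₂ ++ A₃) with hq
  obtain ⟨d, hd⟩ : ∃ d, m - k = d + 1 := ⟨m - k - 1, by omega⟩
  obtain ⟨e, he⟩ : ∃ e, k = e + 1 := ⟨k - 1, by omega⟩
  have hA1ne : A₁ ≠ [] := by
    intro h
    have := congrArg List.length h
    rw [hA1] at this
    simp at this
    omega
  have hA2ne : A₂ ≠ [] := by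
    rw [hA2]
    simpa using hIne
  have hA3ne : A₃ ≠ [] := by
    intro h
    have := congrArg List.length h
    rw [hA3] at this
    simp at this
    omega
  have hqne : q ≠ [] := by
    rw [hq]
    intro h
    exact hA1ne (List.append_eq_nil_iff.1 h).1
  have hflip : flip G.Adj = G.Adj := by
    ext x y
    exact G.adj_comm y x
  -- head and last of q
  have hhead? : q.head? = some (f (a - 1)) := by
    rw [hq, List.head?_append_of_ne_nil _ hA1ne, hA1, hd, List.range_succ_eq_map,
      List.map_cons, List.head?_cons]
    simp
  have hlast? : q.getLast? = some (f (b - 1)) := by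
    have hcast1 : ((e : ℕ) : ZMod m) = b - a - 1 := by
      have : ((k : ℕ) : ZMod m) = ((e : ℕ) : ZMod m) + 1 := by
        rw [he]; push_cast; ring
      rw [this] at hkcast
      linear_combination hkcast
    rw [hq, List.getLast?_append, List.getLast?_append, hA3, he, List.range_succ,
      List.map_append, List.getLast?_append, List.map_singleton]
    simp only [List.getLast?_singleton, Option.some_or]
    congr 1
    rw [hcast1]
    ring
  -- chain of q
  have hchainA1 : List.IsChain G.Adj A₁ := by
    rw [hA1, List.isChain_map, hd]
    refine (List.isChain_range_succ _ d).2 ?_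
    intro i hi
    have e1 : a - 1 - ((i + 1 : ℕ) : ZMod m) = a - 2 - (i : ℕ) := by push_cast; ring
    have e2 : a - 2 - ((i : ℕ) : ZMod m) + 1 = a - 1 - (i : ℕ) := by ring
    show G.Adj (f (a - 1 - (i : ℕ))) (f (a - 1 - ((i + 1 : ℕ) : ZMod m)))
    rw [e1, ← e2]
    exact (hadj _).symm
  have hchainA2 : List.IsChain G.Adj A₂ := by
    rw [hA2, List.isChain_reverse, show (fun a b => G.Adj b a) = G.Adj from hflip]
    exact hchainI
  have hchainA3 : List.IsChain G.Adj A₃ := by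
    rw [hA3, List.isChain_map, he]
    refine (List.isChain_range_succ _ e).2 ?_
    intro i hi
    have e1 : a + ((i + 1 : ℕ) : ZMod m) = a + (i : ℕ) + 1 := by push_cast; ring
    show G.Adj (f (a + (i : ℕ))) (f (a + ((i + 1 : ℕ) : ZMod m)))
    rw [e1]
    exact hadj _
  have hchainq : List.IsChain G.Adj q := by
    rw [hq]
    refine List.isChain_append.2 ⟨hchainA1, List.isChain_append.2 ⟨hchainA2, hchainA3, ?_⟩, ?_⟩
    · intro x hx y hy
      rw [hA2, List.getLast?_reverse, List.head?_eq_head hIne] at hx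
      rw [hA3, he, List.range_succ_eq_map, List.map_cons, List.head?_cons] at hy
      simp only [Option.mem_def, Option.some_inj] at hx hy
      subst hx; subst hy
      simp only [Nat.cast_zero, add_zero]
      exact hJhead.symm
    · intro x hx y hy
      rw [hA1, hd, List.range_succ, List.map_append, List.getLast?_append,
        List.map_singleton, List.getLast?_singleton] at hx
      rw [List.head?_append_of_ne_nil _ hA2ne, hA2, List.head?_reverse,
        List.getLast?_eq_getLast hIne] at hy
      simp only [Option.some_or, Option.mem_def, Option.some_inj] at hx hy
      subst hx; subst hy
      have hcastd : ((d : ℕ) : ZMod m) = a - b - 1 := by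
        have hmk : ((m - k : ℕ) : ZMod m) = ((d : ℕ) : ZMod m) + 1 := by
          rw [hd]; push_cast; ring
        have hmk2 : ((m - k : ℕ) : ZMod m) = -(b - a) := by
          rw [Nat.cast_sub (le_of_lt hkm), ZMod.natCast_self, hkcast]
          ring
        rw [hmk2] at hmk
        linear_combination -hmk
      have : a - 1 - ((d : ℕ) : ZMod m) = b := by
        rw [hcastd]; ring
      rw [this]
      exact hJlast.symm
  -- nodup of q
  have hcastinj : ∀ i j : ℕ, i < m → j < m → ((i : ℕ) : ZMod m) = ((j : ℕ) : ZMod m) → i = j := by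
    intro i j hi hj hij
    have := congrArg ZMod.val hij
    rwa [ZMod.val_cast_of_lt hi, ZMod.val_cast_of_lt hj] at this
  have hnodupA1 : A₁.Nodup := by
    rw [hA1]
    refine List.nodup_range.map_on ?_
    intro i hi j hj hij
    rw [List.mem_range] at hi hj
    have h1 : ((i : ℕ) : ZMod m) = ((j : ℕ) : ZMod m) := by
      have := hinj hij
      linear_combination -this
    exact hcastinj i j (by omega) (by omega) h1
  have hnodupA3 : A₃.Nodup := by
    rw [hA3]
    refine List.nodup_range.map_on ?_
    intro i hi j hj hij
    rw [List.mem_range] at hi hj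
    have h1 : ((i : ℕ) : ZMod m) = ((j : ℕ) : ZMod m) := by
      have := hinj hij
      linear_combination this
    exact hcastinj i j (by omega) (by omega) h1
  have hnodupA2 : A₂.Nodup := by
    rw [hA2, List.nodup_reverse]
    exact hInodup
  have hmemA2 : ∀ x ∈ A₂, x ∉ Set.range f := by
    intro x hx
    rw [hA2, List.mem_reverse] at hx
    exact hImem x hx
  have hnodupq : q.Nodup := by
    rw [hq]
    refine List.nodup_append.2 ⟨hnodupA1, List.nodup_append.2 ⟨hnodupA2, hnodupA3, ?_⟩, ?_⟩
    · -- A₂ disjoint A₃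
      intro x hx x' hx' hxx
      subst hxx
      rw [hA3, List.mem_map] at hx'
      obtain ⟨i, -, rfl⟩ := hx'
      exact hmemA2 _ hx ⟨_, rfl⟩
    · -- A₁ disjoint A₂ ++ A₃
      intro x hx x' hx' hxx
      subst hxx
      rw [hA1, List.mem_map] at hx
      obtain ⟨i, hi, rfl⟩ := hx
      rw [List.mem_range] at hi
      rcases List.mem_append.1 hx' with h | h
      · exact hmemA2 _ h ⟨_, rfl⟩
      · rw [hA3, List.mem_map] at h
        obtain ⟨j, hj, hji⟩ := h
        rw [List.mem_range] at hj
        have h0 : ((i + j + 1 : ℕ) : ZMod m) = 0 := by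
          have := hinj hji
          push_cast
          linear_combination this
        have hdvd : m ∣ i + j + 1 := (ZMod.natCast_eq_zero_iff _ _).1 h0
        have h5 := Nat.le_of_dvd (by omega) hdvd
        omega
  -- length of q
  have hqlen : m < q.length := by
    rw [hq]
    simp only [List.length_append, hA1, hA2, hA3, List.length_map, List.length_range,
      List.length_reverse]
    rw [hIlen]
    omega
  -- conclude
  have hkey := aux_key h3 hmax q hnodupq hchainq hqlen hqne
  have hh : q.head hqne = f (a - 1) := by
    have := List.head?_eq_head hqne
    rw [hhead?] at this
    exact (Option.some_inj.1 this).symm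
  have hl : q.getLast hqne = f (b - 1) := by
    have := List.getLast?_eq_getLast hqne
    rw [hlast?] at this
    exact (Option.some_inj.1 this).symm
  rw [hh, hl] at hkey
  exact hkey

/-- Lemma 3(b): with `v_i = f a`, `v_j = f b` distinct vertices of a longest
cycle joined by a path whose internal vertices lie in the component `R`,
`v_i⁻v_j⁻ ∉ Ẽ(G)` and `v_i⁺v_j⁺ ∉ Ẽ(G)`. -/
theorem lemma3b {V : Type*} [Fintype V] [DecidableEq V] (G : SimpleGraph V)
    (hnh : ¬ G.IsHamiltonian)
    (m : ℕ) (f : ZMod m → V) (hC : IsLongestCycleMap G m f)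
    (R : Set V) (hR : IsCompOf G (Set.range f)ᶜ R)
    (a b : ZMod m) (hab : a ≠ b)
    (p : G.Walk (f a) (f b)) (hp : p.IsPath) (hlen : 2 ≤ p.length)
    (hint : ∀ x ∈ p.support, x ≠ f a → x ≠ f b → x ∈ R) :
    ¬ TEdge G (f (a - 1)) (f (b - 1)) ∧ ¬ TEdge G (f (a + 1)) (f (b + 1)) := by
  obtain ⟨hR1, hR2, hR3, hR4⟩ := hR
  have hint' : ∀ x ∈ p.support, x ≠ f a → x ≠ f b → x ∉ Set.range f := by
    intro x hx h1 h2
    have := hR2 (hint x hx h1 h2)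
    simpa using this
  constructor
  · exact lemma3b_minus hC a b hab p hp hlen hint'
  · have h3 := hC.1.1
    set g : ZMod m → V := fun i => f (-i) with hg
    have hCg : IsLongestCycleMap G m g := by
      refine ⟨⟨h3, ?_, ?_⟩, hC.2⟩
      · intro i j hij
        simp only [hg] at hij
        have := hC.1.2.1 hij
        simpa using this
      · intro i
        have hstep := (hC.1.2.2 (-i - 1)).symm
        have e1 : -i - 1 + 1 = -i := by ring
        rw [e1] at hstep
        simp only [hg]
        have e2 : -(i + 1) = -i - 1 := by ring
        rw [e2]
        exact hstep
    have hrange : Set.range g = Set.range f := by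
      ext v
      constructor
      · rintro ⟨i, rfl⟩; exact ⟨-i, rfl⟩
      · rintro ⟨i, rfl⟩; exact ⟨-i, by simp only [hg, neg_neg]⟩
    have hga : g (-a) = f a := by simp only [hg, neg_neg]
    have hgb : g (-b) = f b := by simp only [hg, neg_neg]
    have hmain := lemma3b_minus hCg (-a) (-b) (by simpa using hab)
      (p.copy hga.symm hgb.symm) (by rwa [SimpleGraph.Walk.isPath_copy])
      (by rwa [SimpleGraph.Walk.length_copy])
      (by
        intro x hx h1 h2
        rw [SimpleGraph.Walk.support_copy] at hx
        rw [hga] at h1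
        rw [hgb] at h2
        rw [hrange]
        exact hint' x hx h1 h2)
    have e1 : g (-a - 1) = f (a + 1) := by simp only [hg]; congr 1; ring
    have e2 : g (-b - 1) = f (b + 1) := by simp only [hg]; congr 1; ring
    rwa [e1, e2] at hmain
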